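/- arXiv:1310.2510 — 4 statements merged into one kernel-verified Lean document; each statement's English description precedes it below -/
import Mathlib

section
/- Let ω₁, ω₂, ω₃, ω₄ be unit vectors in ℝ³ with ω₁ + ω₂ + ω₃ + ω₄ = 0. Then |ω₁+ω₂|·|ω₃+ω₄| + |ω₁+ω₃|·|ω₂+ω₄| + |ω₁+ω₄|·|ω₂+ω₃| = 4. -/
theorem sphere_quadrilinear_identity
    (ω₁ ω₂ ω₃ ω₄ : EuclideanSpace ℝ (Fin 3))
    (h₁ : ‖ω₁‖ = 1) (h₂ : ‖ω₂‖ = 1) (h₃ : ‖ω₃‖ = 1) (h₄ : ‖ω₄‖ = 1)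
    (hsum : ω₁ + ω₂ + ω₃ + ω₄ = 0) :
    ‖ω₁ + ω₂‖ * ‖ω₃ + ω₄‖ + ‖ω₁ + ω₃‖ * ‖ω₂ + ω₄‖ + ‖ω₁ + ω₄‖ * ‖ω₂ + ω₃‖ = 4 := by
  have e34 : ω₃ + ω₄ = -(ω₁ + ω₂) := by
    rw [eq_neg_iff_add_eq_zero]; rw [← hsum]; abel
  have e24 : ω₂ + ω₄ = -(ω₁ + ω₃) := by
    rw [eq_neg_iff_add_eq_zero]; rw [← hsum]; abel
  have e23 : ω₂ + ω₃ = -(ω₁ + ω₄) := by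
    rw [eq_neg_iff_add_eq_zero]; rw [← hsum]; abel
  rw [e34, e24, e23, norm_neg, norm_neg, norm_neg]
  have k12 := norm_add_sq_real ω₁ ω₂
  have k13 := norm_add_sq_real ω₁ ω₃
  have k14 := norm_add_sq_real ω₁ ω₄
  have hi : inner ℝ ω₁ (ω₂ + ω₃ + ω₄) = (-1 : ℝ) := by
    have : ω₂ + ω₃ + ω₄ = -ω₁ := by
      rw [eq_neg_iff_add_eq_zero]; rw [← hsum]; abel
    rw [this, inner_neg_right, real_inner_self_eq_norm_sq, h₁]; norm_num
  rw [inner_add_right, inner_add_right] at hi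
  have sq12 : ‖ω₁ + ω₂‖ * ‖ω₁ + ω₂‖ = ‖ω₁ + ω₂‖ ^ 2 := (sq _).symm
  have sq13 : ‖ω₁ + ω₃‖ * ‖ω₁ + ω₃‖ = ‖ω₁ + ω₃‖ ^ 2 := (sq _).symm
  have sq14 : ‖ω₁ + ω₄‖ * ‖ω₁ + ω₄‖ = ‖ω₁ + ω₄‖ ^ 2 := (sq _).symm
  rw [sq12, sq13, sq14, k12, k13, k14, h₁, h₂, h₃, h₄]
  linarith
end

section
/- Let f be a nonnegative measurable function on S² satisfying f(ω)·f(ν) = f(-ω)·f(-ν) for σ×σ-almost every (ω, ν) ∈ S² × S², and suppose f is not almost everywhere zero. Then f(ω) = f(-ω) for σ-almost every ω ∈ S². -/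
open Metric MeasureTheory

theorem antipodal_symmetry_from_product_identity
    (f : sphere (0 : EuclideanSpace ℝ (Fin 3)) 1 → ℝ)
    (σ : Measure (sphere (0 : EuclideanSpace ℝ (Fin 3)) 1))
    (hσ : σ = (volume : Measure (EuclideanSpace ℝ (Fin 3))).toSphere)
    (hf_meas : Measurable f) (hf_nonneg : ∀ ω, 0 ≤ f ω)
    (hf_int : Integrable f σ)
    (hprod : ∀ᵐ p ∂(σ.prod σ), f p.1 * f p.2 = f (-p.1) * f (-p.2))
    (hf_ne : ¬ (f =ᵐ[σ] 0)) :
    ∀ᵐ ω ∂σ, f ω = f (-ω) := by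
  have hfin : IsFiniteMeasure σ := by subst hσ; infer_instance
  set F : sphere (0 : EuclideanSpace ℝ (Fin 3)) 1 → ENNReal :=
    fun ω => ENNReal.ofReal (f ω) with hF
  have hFmeas : Measurable F := hf_meas.ennreal_ofReal
  have hGmeas : Measurable (fun ω => F (-ω)) := hFmeas.comp measurable_neg
  have hprod' : ∀ᵐ p ∂(σ.prod σ), F p.1 * F p.2 = F (-p.1) * F (-p.2) := by
    filter_upwards [hprod] with p hp
    simp only [hF, ← ENNReal.ofReal_mul (hf_nonneg p.1),
      ← ENNReal.ofReal_mul (hf_nonneg (-p.1)), hp]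
  set I : ENNReal := ∫⁻ ω, F ω ∂σ with hI
  set J : ENNReal := ∫⁻ ω, F (-ω) ∂σ with hJ
  have hIlt : I < ⊤ := by
    have : I = ∫⁻ ω, (‖f ω‖₊ : ENNReal) ∂σ := by
      rw [hI]
      exact lintegral_congr fun ω => (Real.enorm_eq_ofReal (hf_nonneg ω)).symm
    rw [this]
    exact hf_int.2
  have hIne : I ≠ 0 := by
    intro h0
    rw [hI, lintegral_eq_zero_iff hFmeas] at h0
    apply hf_ne
    filter_upwards [h0] with ω hω
    exact le_antisymm (ENNReal.ofReal_eq_zero.1 hω) (hf_nonneg ω)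
  have hm1 : Measurable (fun p : (sphere (0 : EuclideanSpace ℝ (Fin 3)) 1) ×
      (sphere (0 : EuclideanSpace ℝ (Fin 3)) 1) => F p.1 * F p.2) :=
    (hFmeas.comp measurable_fst).mul (hFmeas.comp measurable_snd)
  have hm2 : Measurable (fun p : (sphere (0 : EuclideanSpace ℝ (Fin 3)) 1) ×
      (sphere (0 : EuclideanSpace ℝ (Fin 3)) 1) => F (-p.1) * F (-p.2)) :=
    (hGmeas.comp measurable_fst).mul (hGmeas.comp measurable_snd)
  have e1 : ∫⁻ p, F p.1 * F p.2 ∂(σ.prod σ) = I * I := by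
    rw [lintegral_prod _ hm1.aemeasurable]
    simp only [lintegral_const_mul _ hFmeas]
    rw [lintegral_mul_const _ hFmeas]
  have e2 : ∫⁻ p, F (-p.1) * F (-p.2) ∂(σ.prod σ) = J * J := by
    rw [lintegral_prod _ hm2.aemeasurable]
    simp only [lintegral_const_mul _ hGmeas]
    rw [lintegral_mul_const _ hGmeas]
  have hsq : I * I = J * J := by rw [← e1, ← e2]; exact lintegral_congr_ae hprod'
  have hIJ : I = J := by
    rcases lt_trichotomy I J with h | h | h
    · exact absurd hsq (ne_of_lt (ENNReal.mul_lt_mul h h))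
    · exact h
    · exact absurd hsq.symm (ne_of_lt (ENNReal.mul_lt_mul h h))
  have hsec : ∀ᵐ ω ∂σ, ∀ᵐ ν ∂σ, F ω * F ν = F (-ω) * F (-ν) :=
    Measure.ae_ae_of_ae_prod hprod'
  filter_upwards [hsec] with ω hω
  have hint : F ω * I = F (-ω) * J := by
    rw [hI, hJ, ← lintegral_const_mul _ hFmeas, ← lintegral_const_mul _ hGmeas]
    exact lintegral_congr_ae hω
  rw [← hIJ] at hint
  have hFω : F ω = F (-ω) := (ENNReal.mul_left_inj hIne hIlt.ne).1 hint
  have h := congrArg ENNReal.toReal hFω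
  rwa [hF, ENNReal.toReal_ofReal (hf_nonneg ω), ENNReal.toReal_ofReal (hf_nonneg (-ω))] at h
end

section
/- For every integer k ≥ 0, ∫_{-1}^{1} P_k(t)/√(2-2t) dt = 2/(2k+1), where P_k is the Legendre polynomial of degree k. -/
open Polynomial

/-- The Legendre polynomial of degree `k`, via Rodrigues' formula. -/
noncomputable def legendre (k : ℕ) : Polynomial ℝ :=
  (1 / (2 ^ k * k.factorial) : ℝ) • derivative^[k] ((X ^ 2 - 1) ^ k)

open Finset

noncomputable def rhoP (k : ℕ) : ℕ → Polynomial ℝ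
  | 0 => 1
  | (m+1) => C (2*((k:ℝ) - m)) * X * rhoP k m + (X^2 - 1) * derivative (rhoP k m)

lemma rho_spec (k : ℕ) : ∀ m, m ≤ k →
    derivative^[m] ((X^2 - 1 : Polynomial ℝ)^k) = (X^2-1)^(k-m) * rhoP k m := by
  intro m
  induction m with
  | zero => intro _; simp [rhoP]
  | succ m ih =>
    intro hm
    have hmk : m ≤ k := by omega
    rw [Function.iterate_succ_apply', ih hmk]
    set n := k - (m+1) with hn
    have h1 : k - m = n + 1 := by omega
    have h2 : (k:ℝ) - m = (n:ℝ) + 1 := by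
      have : k = n + m + 1 := by omega
      rw [this]; push_cast; ring
    rw [h1, rhoP, h2]
    rw [derivative_mul, derivative_pow]
    simp only [derivative_sub, derivative_one, derivative_X_pow]
    push_cast
    simp only [C_add, C_mul, C_1]
    ring

lemma lemB (k i : ℕ) (h : i < k) :
    (2 - 2*X) * derivative ((X+1)^(k-i) * rhoP k i) =
      C (-2 : ℝ) * ((X+1)^(k-i-1) * rhoP k (i+1)) +
        C (2*((k:ℝ)-i)) * ((X+1)^(k-i) * rhoP k i) := by
  obtain ⟨j, rfl⟩ : ∃ j, k = j + i + 1 := ⟨k - i - 1, by omega⟩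
  have e1 : j + i + 1 - i = j + 1 := by omega
  have e2 : j + i + 1 - i - 1 = j := by omega
  have e3 : ((j + i + 1 : ℕ):ℝ) - i = (j:ℝ) + 1 := by push_cast; ring
  rw [e2, e1, rhoP, e3]
  rw [derivative_mul, derivative_pow]
  simp only [derivative_add, derivative_one, derivative_X, add_zero, mul_one]
  push_cast
  simp only [map_neg, map_ofNat, C_add, C_mul, C_1]
  ring

lemma sum_identity : ∀ (j i : ℕ), ∑ m ∈ range (j+1), (-1:ℝ)^m * (j.choose m) / (2*((i:ℝ)+m)+1)
    = 2^j * (j.factorial) / ∏ l ∈ range (j+1), (2*((i:ℝ)+l)+1) := by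
  intro j
  induction j with
  | zero => intro i; simp
  | succ j ih =>
    intro i
    have hA := ih i
    have hB := ih (i+1)
    push_cast at hB
    have p1 : (0:ℝ) < ∏ l ∈ range (j+1), (2*((i:ℝ)+l)+1) :=
      prod_pos fun l _ => by positivity
    have p2 : (0:ℝ) < ∏ l ∈ range (j+1), (2*((i:ℝ)+1+l)+1) :=
      prod_pos fun l _ => by positivity
    have p3 : (0:ℝ) < ∏ l ∈ range (j+2), (2*((i:ℝ)+l)+1) :=
      prod_pos fun l _ => by positivity
    have hA' : ∑ m ∈ range (j+2), (-1:ℝ)^m * (j.choose m) / (2*((i:ℝ)+m)+1)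
        = 2^j * (j.factorial) / ∏ l ∈ range (j+1), (2*((i:ℝ)+l)+1) := by
      rw [Finset.sum_range_succ, Nat.choose_succ_self]
      simpa using hA
    have hT : ∑ m ∈ range (j+1), (-1:ℝ)^(m+1) * (j.choose (m+1)) / (2*((i:ℝ)+(m+1))+1)
        = 2^j * (j.factorial) / (∏ l ∈ range (j+1), (2*((i:ℝ)+l)+1)) - 1/(2*(i:ℝ)+1) := by
      rw [Finset.sum_range_succ'] at hA'
      push_cast at hA' ⊢
      simp only [add_zero, one_mul, mul_one, Nat.choose_zero_right, pow_zero, Nat.cast_one]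
        at hA'
      linarith [hA']
    have split : ∑ m ∈ range (j+2), (-1:ℝ)^m * ((j+1).choose m) / (2*((i:ℝ)+m)+1)
        = 1/(2*(i:ℝ)+1)
          + ((∑ m ∈ range (j+1), (-1:ℝ)^(m+1) * (j.choose (m+1)) / (2*((i:ℝ)+(m+1))+1))
          - ∑ m ∈ range (j+1), (-1:ℝ)^m * (j.choose m) / (2*((i:ℝ)+1+m)+1)) := by
      rw [Finset.sum_range_succ', ← Finset.sum_sub_distrib, add_comm (1/(2*(i:ℝ)+1))]
      congr 1
      · apply Finset.sum_congr rfl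
        intro m _
        rw [Nat.choose_succ_succ]
        push_cast
        rw [show 2*((i:ℝ)+((m:ℝ)+1))+1 = 2*((i:ℝ)+1+(m:ℝ))+1 by ring]
        ring
      · simp
    have e1 : (∏ l ∈ range (j+2), (2*((i:ℝ)+l)+1))
        = (∏ l ∈ range (j+1), (2*((i:ℝ)+l)+1)) * (2*((i:ℝ)+((j:ℝ)+1))+1) := by
      rw [Finset.prod_range_succ]; push_cast; ring
    have e2 : (∏ l ∈ range (j+2), (2*((i:ℝ)+l)+1))
        = (∏ l ∈ range (j+1), (2*((i:ℝ)+1+l)+1)) * (2*(i:ℝ)+1) := by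
      rw [Finset.prod_range_succ']
      congr 1
      · apply Finset.prod_congr rfl; intro l _; push_cast; ring
      · norm_num
    have key : 1/(∏ l ∈ range (j+1), (2*((i:ℝ)+l)+1))
          - 1/(∏ l ∈ range (j+1), (2*((i:ℝ)+1+l)+1))
        = (2*(j:ℝ)+2)/(∏ l ∈ range (j+2), (2*((i:ℝ)+l)+1)) := by
      rw [div_sub_div _ _ p1.ne' p2.ne', div_eq_div_iff (by positivity) p3.ne']
      linear_combination
        (∏ l ∈ range (j+1), (2*((i:ℝ)+1+l)+1)) * e1
          - (∏ l ∈ range (j+1), (2*((i:ℝ)+l)+1)) * e2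
    rw [split, hT, hB]
    push_cast [Nat.factorial_succ]
    linear_combination (2^j * (j.factorial:ℝ)) * key

noncomputable def cval (k : ℕ) : ℕ → ℝ
  | 0 => (-1:ℝ)^(k+1) * (2^k * k.factorial) / (∏ l ∈ range (k+1), (2*(l:ℝ)+1))
  | (i+1) => -(2*((k:ℝ)-i) - 1) * cval k i

lemma Lop_pow (m : ℕ) : (2 - 2*X) * derivative ((X-1:Polynomial ℝ)^m) - (X-1)^m
    = C (-(2*(m:ℝ)+1)) * (X-1)^m := by
  cases m with
  | zero => simp
  | succ n =>
    rw [derivative_pow]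
    simp only [derivative_sub, derivative_X, derivative_one, sub_zero, mul_one,
      Nat.add_sub_cancel]
    push_cast
    simp only [map_neg, map_ofNat, C_add, C_mul, C_1]
    ring

noncomputable def bq (k : ℕ) : Polynomial ℝ :=
  ∑ m ∈ range (k+1),
    C ((((-2:ℝ))^k)⁻¹ * (k.choose m : ℝ) * 2^(k-m) * (-(2*(m:ℝ)+1))⁻¹) * (X - 1)^m

lemma Lop_bq (k : ℕ) : (2 - 2*X) * derivative (bq k) - bq k
    = C ((((-2:ℝ))^k)⁻¹) * ((X+1)^k * rhoP k 0) := by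
  rw [bq, derivative_sum, Finset.mul_sum, ← Finset.sum_sub_distrib]
  have step : ∀ m ∈ range (k+1),
      (2 - 2*X) * derivative (C ((((-2:ℝ))^k)⁻¹ * (k.choose m : ℝ) * 2^(k-m) * (-(2*(m:ℝ)+1))⁻¹) * (X - 1)^m)
        - C ((((-2:ℝ))^k)⁻¹ * (k.choose m : ℝ) * 2^(k-m) * (-(2*(m:ℝ)+1))⁻¹) * (X - 1)^m
      = C ((((-2:ℝ))^k)⁻¹) * ((X-1)^m * 2^(k-m) * (k.choose m : Polynomial ℝ)) := by
    intro m _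
    rw [derivative_C_mul]
    have : (2 - 2*X) * (C ((((-2:ℝ))^k)⁻¹ * (k.choose m : ℝ) * 2^(k-m) * (-(2*(m:ℝ)+1))⁻¹) * derivative ((X - 1)^m))
        - C ((((-2:ℝ))^k)⁻¹ * (k.choose m : ℝ) * 2^(k-m) * (-(2*(m:ℝ)+1))⁻¹) * (X - 1)^m
      = C ((((-2:ℝ))^k)⁻¹ * (k.choose m : ℝ) * 2^(k-m) * (-(2*(m:ℝ)+1))⁻¹) *
          ((2 - 2*X) * derivative ((X-1)^m) - (X-1)^m) := by ring
    rw [this, Lop_pow, ← mul_assoc, ← C_mul]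
    have hne : (-(2*(m:ℝ)+1)) ≠ 0 := by
      have h0 : (0:ℝ) < 2*(m:ℝ)+1 := by positivity
      intro h; linarith [neg_eq_zero.mp h]
    have hc : (((-2:ℝ))^k)⁻¹ * (k.choose m : ℝ) * 2^(k-m) * (-(2*(m:ℝ)+1))⁻¹ * (-(2*(m:ℝ)+1))
        = (((-2:ℝ))^k)⁻¹ * (k.choose m : ℝ) * 2^(k-m) := by
      rw [mul_assoc, inv_mul_cancel₀ hne, mul_one]
    rw [hc]
    simp only [C_mul, map_natCast, map_pow, map_ofNat]
    ring
  rw [Finset.sum_congr rfl step, ← Finset.mul_sum]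
  congr 1
  have := add_pow (X - 1 : Polynomial ℝ) 2 k
  have h2 : (X - 1 + 2 : Polynomial ℝ) = X + 1 := by ring
  rw [h2] at this
  rw [rhoP, mul_one, this]

lemma eval_bq (k : ℕ) : (bq k).eval (-1) = cval k 0 := by
  have hs := sum_identity k 0
  simp only [Nat.cast_zero, zero_add] at hs
  rw [bq, eval_finset_sum]
  simp only [eval_mul, eval_C, eval_pow, eval_sub, eval_X, eval_one]
  have sq : ((-1:ℝ))^k * (-1)^k = 1 := by
    rw [← pow_add, show k + k = 2*k by omega, pow_mul]; norm_num
  have step : ∀ m ∈ range (k+1),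
      (((-2:ℝ))^k)⁻¹ * (k.choose m : ℝ) * 2^(k-m) * (-(2*(m:ℝ)+1))⁻¹ * ((-1:ℝ) - 1)^m
      = (-1:ℝ)^(k+1) * ((-1:ℝ)^m * (k.choose m : ℝ) / (2*(m:ℝ)+1)) := by
    intro m hm
    have hmk : m ≤ k := by simpa using Nat.lt_succ_iff.mp (Finset.mem_range.mp hm)
    have e1 : (2:ℝ)^(k-m) * 2^m = 2^k := by
      rw [← pow_add, Nat.sub_add_cancel hmk]
    have h2 : ((-1:ℝ) - 1)^m = (-1:ℝ)^m * 2^m := by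
      rw [show ((-1:ℝ) - 1) = (-1) * 2 by norm_num, mul_pow]
    have h3 : ((-2:ℝ))^k = (-1:ℝ)^k * 2^k := by
      rw [show ((-2:ℝ)) = (-1) * 2 by norm_num, mul_pow]
    have hne : (2*(m:ℝ)+1) ≠ 0 := by positivity
    have h2m : ((2:ℝ))^m ≠ 0 := by positivity
    have e1' : (2:ℝ)^(k-m) = 2^k / 2^m := (eq_div_iff h2m).mpr e1
    rw [h2, e1', pow_succ, inv_neg]
    rcases Nat.even_or_odd k with hk | hk <;> rcases Nat.even_or_odd m with hm2 | hm2 <;>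
      simp only [hk.neg_pow, hm2.neg_pow, one_pow, Even.neg_one_pow, Odd.neg_one_pow] <;>
      field_simp [hne] <;> ring
  rw [Finset.sum_congr rfl step, ← Finset.mul_sum, hs, cval]
  ring

lemma key (k : ℕ) : ∀ i, i ≤ k → ∃ Q : Polynomial ℝ,
    ((2 - 2*X) * derivative Q - Q = C ((((-2:ℝ))^(k-i))⁻¹) * ((X+1)^(k-i) * rhoP k i))
    ∧ Q.eval (-1) = cval k i := by
  intro i
  induction i with
  | zero => intro _; exact ⟨bq k, by simpa using Lop_bq k, eval_bq k⟩
  | succ i ih =>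
    intro hik
    obtain ⟨Q, hQ, hv⟩ := ih (by omega)
    refine ⟨C ((((-2:ℝ))^(k-i))⁻¹) * ((X+1)^(k-i) * rhoP k i)
        - C (2*((k:ℝ)-i) - 1) * Q, ?_, ?_⟩
    · have hB := lemB k i (by omega)
      have expand : (2 - 2*X) * derivative (C ((((-2:ℝ))^(k-i))⁻¹) * ((X+1)^(k-i) * rhoP k i)
            - C (2*((k:ℝ)-i) - 1) * Q)
          - (C ((((-2:ℝ))^(k-i))⁻¹) * ((X+1)^(k-i) * rhoP k i) - C (2*((k:ℝ)-i) - 1) * Q)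
          = C ((((-2:ℝ))^(k-i))⁻¹) * ((2 - 2*X) * derivative ((X+1)^(k-i) * rhoP k i))
            - C ((((-2:ℝ))^(k-i))⁻¹) * ((X+1)^(k-i) * rhoP k i)
            - C (2*((k:ℝ)-i) - 1) * ((2 - 2*X) * derivative Q - Q) := by
        rw [derivative_sub, derivative_C_mul, derivative_C_mul]
        ring
      rw [expand, hB, hQ, show k - (i+1) = k - i - 1 from by omega]
      have hc : ((((-2:ℝ))^(k-i))⁻¹) * (-2) = (((-2:ℝ))^(k-i-1))⁻¹ := by
        obtain ⟨n, hn⟩ : ∃ n, k - i = n + 1 := ⟨k-i-1, by omega⟩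
        rw [show k - i - 1 = n by omega, hn, pow_succ, mul_inv, mul_assoc,
          inv_mul_cancel₀ (by norm_num : (-2:ℝ) ≠ 0), mul_one]
      rw [show (C ((((-2:ℝ))^(k-i-1))⁻¹) : Polynomial ℝ)
          = C ((((-2:ℝ))^(k-i))⁻¹) * C (-2:ℝ) from by rw [← C_mul, hc]]
      simp only [map_sub, map_neg, map_ofNat, C_1]
      ring
    · simp only [eval_sub, eval_mul, eval_C, eval_pow, eval_add, eval_X, eval_one,
        neg_add_cancel]
      rw [zero_pow (by omega : k - i ≠ 0)]
      rw [cval, hv]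
      ring

lemma cval_aux (k : ℕ) : ∀ i, i ≤ k →
    cval k i * (∏ l ∈ range (k-i), (2*(l:ℝ)+1)) * (∏ l ∈ range (k+1), (2*(l:ℝ)+1))
    = (-1:ℝ)^(k+1+i) * (2^k * k.factorial) * (∏ l ∈ range k, (2*(l:ℝ)+1)) := by
  intro i
  induction i with
  | zero =>
    intro _
    rw [cval, Nat.sub_zero]
    have hW : (∏ l ∈ range (k+1), (2*(l:ℝ)+1)) ≠ 0 :=
      (prod_pos fun l _ => by positivity).ne'
    have hWk : (∏ l ∈ range (k+1), (2*(l:ℝ)+1)) = (∏ l ∈ range k, (2*(l:ℝ)+1)) * (2*(k:ℝ)+1) :=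
      prod_range_succ _ _
    field_simp
  | succ i ih =>
    intro h
    have IH := ih (by omega)
    rw [show k - i = (k-(i+1)) + 1 by omega, prod_range_succ] at IH
    have hc : ((k - (i+1) : ℕ):ℝ) = (k:ℝ) - i - 1 := by
      rw [Nat.cast_sub h]; push_cast; ring
    rw [hc] at IH
    rw [cval, show k+1+(i+1) = (k+1+i)+1 from by omega, pow_succ]
    linear_combination (-1:ℝ) * IH

lemma cval_k (k : ℕ) : cval k k = -(2^k * (k.factorial:ℝ))/(2*(k:ℝ)+1) := by
  have H := cval_aux k k le_rfl
  rw [Nat.sub_self] at H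
  simp only [range_zero, prod_empty, mul_one] at H
  have hk1 : (∏ l ∈ range (k+1), (2*(l:ℝ)+1)) = (∏ l ∈ range k, (2*(l:ℝ)+1)) * (2*(k:ℝ)+1) :=
    prod_range_succ _ _
  have hsgn : (-1:ℝ)^(k+1+k) = -1 := by
    rw [show k+1+k = 2*k+1 by omega, pow_succ, pow_mul]; norm_num
  rw [hk1, hsgn] at H
  have hWk : (0:ℝ) < ∏ l ∈ range k, (2*(l:ℝ)+1) := prod_pos fun l _ => by positivity
  have h2k : (0:ℝ) < 2*(k:ℝ)+1 := by positivity
  rw [eq_div_iff h2k.ne']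
  apply mul_right_cancel₀ hWk.ne'
  linear_combination H

lemma exists_Q (k : ℕ) : ∃ Q : Polynomial ℝ,
    ((2 - 2*X) * derivative Q - Q = derivative^[k] ((X^2 - 1 : Polynomial ℝ)^k))
    ∧ Q.eval (-1) = -(2^k * (k.factorial:ℝ))/(2*(k:ℝ)+1) := by
  obtain ⟨Q, hQ, hv⟩ := key k k le_rfl
  rw [Nat.sub_self] at hQ
  simp only [pow_zero, inv_one, map_one, one_mul] at hQ
  refine ⟨Q, ?_, by rw [hv, cval_k]⟩
  rw [hQ, rho_spec k k le_rfl, Nat.sub_self, pow_zero, one_mul]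

theorem legendre_integral_inv_sqrt (k : ℕ) :
    ∫ t in (-1 : ℝ)..1, (legendre k).eval t / Real.sqrt (2 - 2 * t) =
      2 / (2 * (k : ℝ) + 1) := by
  obtain ⟨Q, hQ, hv⟩ := exists_Q k
  have hNpos : (0:ℝ) < 2^k * (k.factorial:ℝ) := by positivity
  set N : ℝ := 2^k * (k.factorial:ℝ) with hN
  set F : ℝ → ℝ := fun t => Real.sqrt (2 - 2*t) * Q.eval t / N with hF
  have hFc : Continuous F := by
    apply Continuous.div_const
    exact (Real.continuous_sqrt.comp (by continuity)).mul (Polynomial.continuous Q)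
  have hderiv : ∀ x ∈ Set.Ioo (-1:ℝ) 1,
      HasDerivWithinAt F ((legendre k).eval x / Real.sqrt (2 - 2*x)) (Set.Ioi x) x := by
    intro x hx
    have hs : (0:ℝ) < 2 - 2*x := by linarith [hx.2]
    have hsq : (0:ℝ) < Real.sqrt (2-2*x) := Real.sqrt_pos.mpr hs
    have h1 : HasDerivAt (fun t : ℝ => 2 - 2*t) (-2) x := by
      simpa using ((hasDerivAt_id x).const_mul (2:ℝ)).const_sub 2
    have h2 : HasDerivAt (fun t : ℝ => Real.sqrt (2 - 2*t)) (1/(2*Real.sqrt (2-2*x)) * (-2)) x :=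
      (Real.hasDerivAt_sqrt hs.ne').comp x h1
    have h3 : HasDerivAt (fun t : ℝ => Q.eval t) (Q.derivative.eval x) x := Q.hasDerivAt x
    have h4 := (h2.mul h3).div_const N
    have hLev : (2 - 2*x) * Q.derivative.eval x - Q.eval x
        = (derivative^[k] ((X^2-1:Polynomial ℝ)^k)).eval x := by
      have := congrArg (Polynomial.eval x) hQ
      simpa using this
    have hlegeval : (legendre k).eval x
        = (1/N) * (derivative^[k] ((X^2-1:Polynomial ℝ)^k)).eval x := by
      rw [legendre, eval_smul, smul_eq_mul, hN]
    have heq : (1/(2*Real.sqrt (2-2*x)) * (-2) * Q.eval x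
          + Real.sqrt (2-2*x) * Q.derivative.eval x) / N
        = (legendre k).eval x / Real.sqrt (2 - 2*x) := by
      have hss : Real.sqrt (2-2*x) * Real.sqrt (2-2*x) = 2-2*x := Real.mul_self_sqrt hs.le
      rw [hlegeval, ← hLev]
      have hN0 : N ≠ 0 := hNpos.ne'
      generalize Real.sqrt (2-2*x) = s at hss hsq ⊢
      rw [← hss]
      field_simp
      ring
    exact (heq ▸ h4).hasDerivWithinAt
  have hint : IntervalIntegrable (fun t => (legendre k).eval t / Real.sqrt (2 - 2*t))
      MeasureTheory.volume (-1) 1 := by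
    have base : IntervalIntegrable (fun x : ℝ => x ^ (-(1/2) : ℝ)) MeasureTheory.volume 0 4 :=
      intervalIntegral.intervalIntegrable_rpow' (by norm_num)
    have b2 := (base.comp_mul_left (c := -2)).comp_sub_right 1
    rw [show (0:ℝ)/(-2)+1 = 1 by norm_num, show (4:ℝ)/(-2)+1 = -1 by norm_num] at b2
    have b5 := b2.symm
    have b6 : IntervalIntegrable (fun t : ℝ => (Real.sqrt (2 - 2*t))⁻¹)
        MeasureTheory.volume (-1) 1 := by
      rw [intervalIntegrable_iff] at b5 ⊢
      refine b5.congr_fun ?_ measurableSet_uIoc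
      intro t ht
      rw [Set.uIoc_of_le (by norm_num : (-1:ℝ) ≤ 1)] at ht
      have ht1 : t ≤ 1 := ht.2
      show ((-2:ℝ)*(t-1)) ^ (-(1/2):ℝ) = (Real.sqrt (2-2*t))⁻¹
      have h24 : (-2:ℝ)*(t-1) = 2-2*t := by ring
      rw [h24]
      rcases eq_or_lt_of_le ht1 with h | h
      · subst h
        norm_num [Real.zero_rpow]
      · have hpos : (0:ℝ) < 2 - 2*t := by linarith
        rw [Real.rpow_neg hpos.le, Real.sqrt_eq_rpow]
    have hPcont : ContinuousOn (fun t : ℝ => (legendre k).eval t) (Set.uIcc (-1:ℝ) 1) :=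
      (Polynomial.continuous _).continuousOn
    have b7 := b6.continuousOn_mul hPcont
    simpa [div_eq_mul_inv] using b7
  have hFTC := intervalIntegral.integral_eq_sub_of_hasDeriv_right_of_le
    (by norm_num : (-1:ℝ) ≤ 1) hFc.continuousOn hderiv hint
  rw [hFTC]
  have hF1 : F 1 = 0 := by
    simp only [hF]
    norm_num
  have hFm1 : F (-1) = -2/(2*(k:ℝ)+1) := by
    simp only [hF]
    rw [show (2 - 2*(-1:ℝ)) = 4 by norm_num,
      show Real.sqrt 4 = 2 from by
        rw [show (4:ℝ) = 2^2 by norm_num, Real.sqrt_sq (by norm_num : (0:ℝ) ≤ 2)], hv]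
    rw [hN]
    have h2k1 : (0:ℝ) < 2*(k:ℝ)+1 := by positivity
    field_simp
  rw [hF1, hFm1]
  ring
end

section
/- For every integer k ≥ 1, the integral Λ_k := ∫_{-1}^{1} √(2-2t)·P_k(t) dt is strictly negative. In fact, (2k+1)·Λ_k = 2/(2k+3) - 2/(2k-1). -/
open Polynomial MeasureTheory

noncomputable def II (p : ℝ[X]) : ℝ := ∫ t in (-1:ℝ)..1, Real.sqrt (2 - 2*t) * p.eval t

lemma contI (p : ℝ[X]) : Continuous fun t : ℝ => Real.sqrt (2 - 2*t) * p.eval t :=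
  (Real.continuous_sqrt.comp (by continuity)).mul p.continuous

lemma intgI (p : ℝ[X]) :
    IntervalIntegrable (fun t : ℝ => Real.sqrt (2 - 2*t) * p.eval t) volume (-1) 1 :=
  (contI p).intervalIntegrable _ _

lemma II_add (p q : ℝ[X]) : II (p + q) = II p + II q := by
  unfold II
  rw [← intervalIntegral.integral_add (intgI p) (intgI q)]
  congr 1; funext t; simp [mul_add]

lemma II_smul (a : ℝ) (p : ℝ[X]) : II (a • p) = a * II p := by
  unfold II
  rw [← intervalIntegral.integral_const_mul]
  congr 1; funext t; simp; ring

lemma key_s14 (p : ℝ[X]) :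
    II ((2 - 2 * X) * derivative p) = 3 * II p - 8 * p.eval (-1) := by
  have hint : IntervalIntegrable
      (fun t : ℝ => Real.sqrt (2 - 2*t) * p.eval t
        - (1/3) * (Real.sqrt (2 - 2*t) * ((2 - 2 * X) * derivative p).eval t)) volume (-1) 1 :=
    ((contI p).sub (continuous_const.mul (contI _))).intervalIntegrable _ _
  have hderiv : ∀ t ∈ Set.uIcc (-1:ℝ) 1,
      HasDerivAt (fun t : ℝ => (-1/3) * ((2 - 2*t) ^ ((3:ℝ)/2)) * p.eval t)
        (Real.sqrt (2 - 2*t) * p.eval t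
          - (1/3) * (Real.sqrt (2 - 2*t) * ((2 - 2 * X) * derivative p).eval t)) t := by
    intro t ht
    rw [Set.uIcc_of_le (by norm_num : (-1:ℝ) ≤ 1)] at ht
    have ht' : (0:ℝ) ≤ 2 - 2*t := by have := ht.2; linarith
    have h1 : HasDerivAt (fun t : ℝ => 2 - 2*t) (-2) t := by
      simpa using ((hasDerivAt_id t).const_mul (2:ℝ)).const_sub 2
    have h2 : HasDerivAt (fun t : ℝ => (2 - 2*t) ^ ((3:ℝ)/2))
        (((3:ℝ)/2) * (2 - 2*t) ^ ((3:ℝ)/2 - 1) * (-2)) t :=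
      (Real.hasDerivAt_rpow_const (Or.inr (by norm_num))).comp t h1
    have h3 := p.hasDerivAt t
    have h4 := (h2.const_mul ((-1:ℝ)/3)).mul h3
    refine HasDerivAt.congr_deriv h4 ?_
    have e1 : ((2:ℝ) - 2*t) ^ ((3:ℝ)/2 - 1) = Real.sqrt (2 - 2*t) := by
      rw [show ((3:ℝ)/2 - 1) = 1/2 by norm_num, ← Real.sqrt_eq_rpow]
    have e2 : ((2:ℝ) - 2*t) ^ ((3:ℝ)/2) = (2 - 2*t) * Real.sqrt (2 - 2*t) := by
      rw [show ((3:ℝ)/2) = (1/2) * ((3:ℕ):ℝ) by norm_num, Real.rpow_mul ht',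
        Real.rpow_natCast, ← Real.sqrt_eq_rpow, pow_succ, Real.sq_sqrt ht']
    rw [e1, e2]
    simp only [eval_mul, eval_sub, eval_ofNat, eval_mul, eval_X]
    ring
  have hftc := intervalIntegral.integral_eq_sub_of_hasDerivAt hderiv hint
  have hend : ((2:ℝ) - 2*(1:ℝ)) ^ ((3:ℝ)/2) = 0 := by
    norm_num
  have hstart : ((2:ℝ) - 2*(-1:ℝ)) ^ ((3:ℝ)/2) = 8 := by
    rw [show ((2:ℝ) - 2*(-1:ℝ)) = 4 by norm_num,
      show ((3:ℝ)/2) = (1/2) * ((3:ℕ):ℝ) by norm_num,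
      Real.rpow_mul (by norm_num : (0:ℝ) ≤ 4), Real.rpow_natCast, ← Real.sqrt_eq_rpow,
      show (4:ℝ) = 2^2 by norm_num, Real.sqrt_sq (by norm_num : (0:ℝ) ≤ 2)]
    norm_num
  rw [intervalIntegral.integral_sub (intgI p) ((intgI _).const_mul (1/3)),
    intervalIntegral.integral_const_mul] at hftc
  simp only [hend, hstart] at hftc
  unfold II
  linarith [hftc]

lemma II_zero : II 0 = 0 := by unfold II; simp

lemma II_one : II 1 = 8/3 := by
  have h := key_s14 1
  simp only [derivative_one, mul_zero, II_zero, eval_one] at h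
  linarith

lemma key2 (p : ℝ[X]) :
    II ((X - 1) * derivative p) = -(3/2) * II p + 4 * p.eval (-1) := by
  have h := key_s14 p
  have e : (2 - 2 * X) * derivative p = (-2 : ℝ) • ((X - 1) * derivative p) := by
    rw [smul_eq_C_mul]
    simp only [map_neg, map_add, map_sub, map_mul, map_ofNat, map_one, Polynomial.C_eq_natCast]
    ring
  rw [e, II_smul] at h
  linarith

noncomputable def Bv : ℕ → ℝ
  | 0 => 8/3
  | (m+1) => (4*(m+1)/(2*m+5)) * Bv m

lemma II_pow (m : ℕ) : II ((X + 1)^m) = Bv m := by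
  induction m with
  | zero => simpa [Bv] using II_one
  | succ m ih =>
    have h := key_s14 ((X + 1)^(m+1))
    have hd : derivative ((X + 1 : ℝ[X])^(m+1)) = C ((m:ℝ)+1) * (X + 1)^m := by
      rw [derivative_pow]
      simp
    rw [hd] at h
    have e : (2 - 2 * X) * (C ((m:ℝ)+1) * (X + 1 : ℝ[X])^m)
        = (4*((m:ℝ)+1)) • ((X + 1)^m) + (-2*((m:ℝ)+1)) • ((X + 1)^(m+1)) := by
      rw [smul_eq_C_mul, smul_eq_C_mul]
      simp only [map_neg, map_add, map_sub, map_mul, map_ofNat, map_one, Polynomial.C_eq_natCast]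
      ring
    rw [e, II_add, II_smul, II_smul, ih] at h
    have hev : ((X + 1 : ℝ[X])^(m+1)).eval (-1) = 0 := by simp
    rw [hev] at h
    have h5 : (2*(m:ℝ)+5) ≠ 0 := by positivity
    rw [Bv]
    field_simp
    linarith

noncomputable def sP (k : ℕ) : ℕ → ℝ[X]
  | 0 => (X + 1)^k
  | (i+1) => C ((k:ℝ) - i) * sP k i + (X - 1) * derivative (sP k i)

noncomputable def tQ (k : ℕ) : ℕ → ℝ[X]
  | 0 => 1
  | (i+1) => C (2*((k:ℝ) - i)) * X * tQ k i + (X^2 - 1) * derivative (tQ k i)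

lemma sP_eq (k : ℕ) : ∀ i, i ≤ k → sP k i = (X + 1)^(k - i) * tQ k i := by
  intro i
  induction i with
  | zero => intro _; simp [sP, tQ]
  | succ i ih =>
    intro h
    have hik : i < k := h
    have ih' := ih hik.le
    have hm : k - i = (k - (i+1)) + 1 := by omega
    have hcast : C ((k - (i+1) + 1 : ℕ) : ℝ) = C ((k:ℝ) - i) := by
      congr 1
      push_cast [Nat.cast_sub h]
      ring
    rw [sP, ih', tQ, hm, derivative_mul, derivative_pow]
    simp only [derivative_add, derivative_X, derivative_one, add_tsub_cancel_right]
    rw [hcast, show C (2*((k:ℝ) - (i:ℝ))) = 2 * C ((k:ℝ) - i) by rw [map_mul, map_ofNat]]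
    ring


lemma sP_eval_neg_one (k i : ℕ) (h : i < k) : (sP k i).eval (-1) = 0 := by
  rw [sP_eq k i h.le]
  have : k - i ≠ 0 := by omega
  simp [zero_pow this]

lemma sP_deriv (k : ℕ) : ∀ i, i ≤ k →
    (X - 1)^(k - i) * sP k i = derivative^[i] ((X^2 - 1 : ℝ[X])^k) := by
  intro i
  induction i with
  | zero =>
    intro _
    simp only [Function.iterate_zero, id_eq, Nat.sub_zero, sP]
    rw [← mul_pow]
    congr 1
    ring
  | succ i ih =>
    intro h
    have hik : i < k := h
    have ih' := ih hik.le
    have hm : k - i = (k - (i+1)) + 1 := by omega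
    have hcast : C ((k - (i+1) + 1 : ℕ) : ℝ) = C ((k:ℝ) - i) := by
      congr 1
      push_cast [Nat.cast_sub h]
      ring
    rw [Function.iterate_succ_apply', ← ih', derivative_mul, derivative_pow]
    simp only [derivative_sub, derivative_X, derivative_one, sub_zero, add_tsub_cancel_right]
    rw [hm, hcast, sP]
    simp only [Nat.add_sub_cancel]
    ring

lemma II_sP (k : ℕ) : ∀ i, i ≤ k →
    II (sP k i) = (∏ j ∈ Finset.range i, ((2*((k:ℝ) - j) - 3)/2)) * Bv k := by
  intro i
  induction i with
  | zero => intro _; simp [sP, II_pow]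
  | succ i ih =>
    intro h
    have hik : i < k := h
    have ih' := ih hik.le
    have hkey := key2 (sP k i)
    rw [sP_eval_neg_one k i hik] at hkey
    have : II (sP k (i+1)) = ((k:ℝ) - i) * II (sP k i) + II ((X - 1) * derivative (sP k i)) := by
      rw [sP, ← smul_eq_C_mul, II_add, II_smul]
    rw [this, hkey, ih', Finset.prod_range_succ]
    ring

lemma Bv_arith : ∀ k : ℕ, (1/((2:ℝ)^k * (Nat.factorial k))) *
    ((∏ j ∈ Finset.range k, ((2*(j:ℝ) - 1)/2)) * Bv k)
    = -8/((2*(k:ℝ)-1)*(2*(k:ℝ)+1)*(2*(k:ℝ)+3)) := by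
  intro k
  induction k with
  | zero => norm_num [Bv]
  | succ k ih =>
    have h1 : (2*(k:ℝ)-1) ≠ 0 := by
      rcases Nat.eq_zero_or_pos k with h | h
      · subst h; norm_num
      · have : (1:ℝ) ≤ (k:ℝ) := by exact_mod_cast h
        nlinarith
    have h2 : (2*(k:ℝ)+1) ≠ 0 := by positivity
    have h3 : (2*(k:ℝ)+3) ≠ 0 := by positivity
    have h4 : (2*(k:ℝ)+5) ≠ 0 := by positivity
    have h5 : ((2:ℝ)^k) ≠ 0 := by positivity
    have h6 : ((Nat.factorial k : ℝ)) ≠ 0 := by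
      exact_mod_cast Nat.factorial_ne_zero k
    have h7 : ((k:ℝ)+1) ≠ 0 := by positivity
    rw [Finset.prod_range_succ, Bv, pow_succ, Nat.factorial_succ]
    push_cast
    have e : (1/((2:ℝ)^k * 2 * (((k:ℝ)+1) * (Nat.factorial k)))) *
        (((∏ j ∈ Finset.range k, ((2*(j:ℝ) - 1)/2)) * ((2*(k:ℝ)-1)/2)) *
          ((4*((k:ℝ)+1)/(2*(k:ℝ)+5)) * Bv k))
        = ((1/((2:ℝ)^k * (Nat.factorial k))) *
            ((∏ j ∈ Finset.range k, ((2*(j:ℝ) - 1)/2)) * Bv k)) * ((2*(k:ℝ)-1)/(2*(k:ℝ)+5)) := by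
      field_simp
      ring
    rw [e, ih]
    have g1 : (2*((k:ℝ)+1)-1) = 2*(k:ℝ)+1 := by ring
    have g2 : (2*((k:ℝ)+1)+1) = 2*(k:ℝ)+3 := by ring
    have g3 : (2*((k:ℝ)+1)+3) = 2*(k:ℝ)+5 := by ring
    rw [g1, g2, g3]
    field_simp

lemma refl_prod (k : ℕ) : (∏ j ∈ Finset.range k, ((2*((k:ℝ) - j) - 3)/2))
    = ∏ j ∈ Finset.range k, ((2*(j:ℝ) - 1)/2) := by
  rw [← Finset.prod_range_reflect (fun j => ((2*(j:ℝ) - 1)/2)) k]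
  apply Finset.prod_congr rfl
  intro j hj
  have hj' : j < k := Finset.mem_range.mp hj
  have : ((k - 1 - j : ℕ) : ℝ) = (k:ℝ) - 1 - j := by
    have h1 : j ≤ k - 1 := by omega
    have h2 : (1:ℕ) ≤ k := by omega
    push_cast [Nat.cast_sub h1, Nat.cast_sub h2]
    ring
  rw [this]
  ring

lemma legendre_II (k : ℕ) :
    II (legendre k) = -8/((2*(k:ℝ)-1)*(2*(k:ℝ)+1)*(2*(k:ℝ)+3)) := by
  have hs : derivative^[k] ((X ^ 2 - 1 : ℝ[X]) ^ k) = sP k k := by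
    have h := sP_deriv k k le_rfl
    simpa using h.symm
  have hleg : legendre k = (1/((2:ℝ)^k * (Nat.factorial k))) • sP k k := by
    rw [legendre, hs]
  rw [hleg, II_smul, II_sP k k le_rfl, refl_prod, ← Bv_arith k]

theorem legendre_sqrt_integral_neg (k : ℕ) (hk : 1 ≤ k) :
    (∫ t in (-1 : ℝ)..1, Real.sqrt (2 - 2 * t) * (legendre k).eval t) < 0 ∧
    (2 * (k : ℝ) + 1) * (∫ t in (-1 : ℝ)..1, Real.sqrt (2 - 2 * t) * (legendre k).eval t) =
      2 / (2 * (k : ℝ) + 3) - 2 / (2 * (k : ℝ) - 1) := by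
  have hval : (∫ t in (-1 : ℝ)..1, Real.sqrt (2 - 2 * t) * (legendre k).eval t)
      = -8/((2*(k:ℝ)-1)*(2*(k:ℝ)+1)*(2*(k:ℝ)+3)) := legendre_II k
  have hk1 : (1:ℝ) ≤ (k:ℝ) := by exact_mod_cast hk
  have p1 : (0:ℝ) < 2*(k:ℝ)-1 := by linarith
  have p2 : (0:ℝ) < 2*(k:ℝ)+1 := by linarith
  have p3 : (0:ℝ) < 2*(k:ℝ)+3 := by linarith
  constructor
  · rw [hval]
    apply div_neg_of_neg_of_pos (by norm_num)
    positivity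
  · rw [hval]
    field_simp
    ring
end
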